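/- arXiv:2304.14101 — 2 statements merged into one kernel-verified Lean document; each statement's English description precedes it below -/
import Mathlib

section
/- Let G be a locally compact Hausdorff group acting continuously, properly, isometrically and transitively on a proper metric space (M,d) with base point * and isotropy group K. If a pair (H₁,H₂) of non-empty subsets of G is proper in G, then the pair (S^{H₁}(*), S^{H₂}(*)) is HBI in M, i.e., S^{H₁}(*) ∩ N̄_r(S^{H₂}(*)) is bounded for every r ≥ 0. -/
open scoped Pointwise

/-- The closed `r`-neighborhood of a subset `C` of a metric space. -/
def closedNbhd {M : Type*} [MetricSpace M] (C : Set M) (r : ℝ) : Set M :=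
  {p | ∃ c ∈ C, dist p c ≤ r}

/-- A pair `(H₁, H₂)` of subsets of a topological group is proper in `G`. -/
def IsProperPair {G : Type*} [Group G] [TopologicalSpace G] (H₁ H₂ : Set G) : Prop :=
  ∀ D₁ D₂ : Set G, IsCompact D₁ → IsCompact D₂ →
    IsCompact (closure ((D₁ * H₁ * D₁⁻¹) ∩ (D₂ * H₂ * D₂⁻¹)))

theorem HBI_SH_of_properPair
    {G : Type*} [Group G] [TopologicalSpace G] [IsTopologicalGroup G]
    [LocallyCompactSpace G] [T2Space G]
    {M : Type*} [MetricSpace M] [ProperSpace M] [MulAction G M]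
    (hcont : Continuous fun p : G × M => p.1 • p.2)
    (hisom : ∀ g : G, Isometry fun x : M => g • x)
    (hproper : ∀ D : Set M, IsCompact D →
      IsCompact {g : G | ((fun x : M => g • x) '' D ∩ D).Nonempty})
    (htrans : ∀ x y : M, ∃ g : G, g • x = y)
    (star : M) (H₁ H₂ : Set G) (h₁ : H₁.Nonempty) (h₂ : H₂.Nonempty)
    (hpair : IsProperPair H₁ H₂) :
    ∀ r ≥ (0 : ℝ), Bornology.IsBounded
      (((fun g : G => g • star) '' ({k : G | k • star = star} * H₁)) ∩
        closedNbhd ((fun g : G => g • star) '' ({k : G | k • star = star} * H₂)) r) := by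
  intro r hr
  have horb : Continuous fun g : G => g • star :=
    hcont.comp (continuous_id.prodMk continuous_const)
  set K : Set G := {k : G | k • star = star} with hKdef
  have hKclosed : IsClosed K := by
    have : K = (fun g : G => g • star) ⁻¹' {star} := by
      ext g; simp [hKdef]
    rw [this]
    exact isClosed_singleton.preimage horb
  have hKcompact : IsCompact K := by
    refine (hproper {star} isCompact_singleton).of_isClosed_subset hKclosed ?_
    intro k hk
    exact ⟨star, ⟨star, rfl, hk⟩, rfl⟩
  set Dr : Set G := {g : G | dist (g • star) star ≤ r} with hDrdef
  have hDrclosed : IsClosed Dr :=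
    isClosed_le (horb.dist continuous_const) continuous_const
  have hDrcompact : IsCompact Dr := by
    refine (hproper (Metric.closedBall star r)
      (isCompact_closedBall star r)).of_isClosed_subset hDrclosed ?_
    intro g hg
    exact ⟨g • star, ⟨star, by simpa using hr, rfl⟩, Metric.mem_closedBall.2 hg⟩
  set D₁ : Set G := K ∪ {1} with hD₁def
  set D₂ : Set G := (K ∪ {1}) ∪ Dr⁻¹ with hD₂def
  have hD₁c : IsCompact D₁ := hKcompact.union isCompact_singleton
  have hD₂c : IsCompact D₂ := (hKcompact.union isCompact_singleton).union hDrcompact.inv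
  have hC : IsCompact (closure ((D₁ * H₁ * D₁⁻¹) ∩ (D₂ * H₂ * D₂⁻¹))) :=
    hpair D₁ D₂ hD₁c hD₂c
  refine ((hC.image horb).isBounded).subset ?_
  rintro x ⟨⟨a, ha, rfl⟩, c, ⟨b, hb, rfl⟩, hdist⟩
  obtain ⟨k₁, hk₁, h₁', hh₁, rfl⟩ := ha
  obtain ⟨k₂, hk₂, h₂', hh₂, rfl⟩ := hb
  have hg : ((k₂ * h₂')⁻¹ * (k₁ * h₁')) ∈ Dr := by
    show dist (((k₂ * h₂')⁻¹ * (k₁ * h₁')) • star) star ≤ r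
    rw [← (hisom (k₂ * h₂')).dist_eq]
    simp only [smul_smul, mul_inv_cancel_left]
    exact hdist
  refine ⟨k₁ * h₁', subset_closure ⟨?_, ?_⟩, rfl⟩
  · have : (k₁ * h₁') * 1 ∈ D₁ * H₁ * D₁⁻¹ := by
      refine Set.mul_mem_mul (Set.mul_mem_mul ?_ hh₁) ?_
      · exact Or.inl hk₁
      · rw [Set.mem_inv, inv_one]
        exact Or.inr rfl
    simpa using this
  · have : (k₂ * h₂') * ((k₂ * h₂')⁻¹ * (k₁ * h₁')) ∈ D₂ * H₂ * D₂⁻¹ := by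
      refine Set.mul_mem_mul (Set.mul_mem_mul ?_ hh₂) ?_
      · exact Or.inl (Or.inl hk₂)
      · rw [Set.mem_inv]
        exact Or.inr (by rw [Set.mem_inv, inv_inv]; exact hg)
    rwa [mul_inv_cancel_left] at this
end

section
/- Let G be a locally compact Hausdorff group acting continuously, properly, isometrically and transitively on a proper metric space (M,d) with Property (S), with base point *, isotropy group K at *, and orbit map μ : G → K\M, g ↦ K·(g·*), where K\M carries the orbit metric d^K. Then for non-empty subsets H₁, H₂ of G, the pair (H₁,H₂) is proper in G if and only if for every r ≥ 0 the intersection μ(H₁) ∩ N̄_r(μ(H₂)) is bounded in (K\M, d^K). -/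
open scoped Pointwise

/-- The `K`-orbit of a point, for `K` a subset of a group acting on `M`. -/
def subOrbit {G : Type*} [Group G] {M : Type*} [MulAction G M]
    (K : Set G) (x : M) : Set M :=
  {y : M | ∃ k ∈ K, k • x = y}

/-- The orbit distance `d^K` on the orbit space `K\M`, expressed on representatives:
`d^K(K·x, K·y) = inf {d(x', y') : x' ∈ K·x, y' ∈ K·y}`. -/
noncomputable def orbitDistOf {G : Type*} [Group G] {M : Type*} [MetricSpace M]
    [MulAction G M] (K : Set G) (x y : M) : ℝ :=
  sInf (Set.image2 dist (subOrbit K x) (subOrbit K y))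

section Aux

variable {G : Type*} [Group G] {M : Type*} [MetricSpace M] [MulAction G M]

lemma orbitDist_bddBelow (K : Set G) (x y : M) :
    BddBelow (Set.image2 dist (subOrbit K x) (subOrbit K y)) := by
  refine ⟨0, fun z hz => ?_⟩
  obtain ⟨a, -, b, -, rfl⟩ := hz
  exact dist_nonneg

lemma orbitDist_le (K : Set G) {x y x' y' : M}
    (hx : x' ∈ subOrbit K x) (hy : y' ∈ subOrbit K y) :
    orbitDistOf K x y ≤ dist x' y' :=
  csInf_le (orbitDist_bddBelow K x y) (Set.mem_image2_of_mem hx hy)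

lemma mem_subOrbit_self {K : Set G} (hK : (1 : G) ∈ K) (x : M) : x ∈ subOrbit K x :=
  ⟨1, hK, one_smul _ _⟩

lemma orbitDist_nonneg {K : Set G} (hK : (1 : G) ∈ K) (x y : M) :
    0 ≤ orbitDistOf K x y := by
  refine le_csInf ⟨dist x y,
    Set.mem_image2_of_mem (mem_subOrbit_self hK x) (mem_subOrbit_self hK y)⟩ ?_
  rintro z ⟨a, -, b, -, rfl⟩
  exact dist_nonneg

/-- From `d^K(x,y) < t`, extract `k₀ ∈ K` with `dist x (k₀ • y) < t`,
assuming `K` is a subgroup-like set. -/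
lemma orbitDist_extract (hisom : ∀ g : G, Isometry fun x : M => g • x)
    {K : Set G} (hK1 : (1 : G) ∈ K) (hKinv : ∀ k ∈ K, k⁻¹ ∈ K)
    (hKmul : ∀ k ∈ K, ∀ k' ∈ K, k * k' ∈ K)
    {x y : M} {t : ℝ} (h : orbitDistOf K x y < t) :
    ∃ k₀ ∈ K, dist x (k₀ • y) < t := by
  have hne : (Set.image2 dist (subOrbit K x) (subOrbit K y)).Nonempty :=
    ⟨dist x y, Set.mem_image2_of_mem (mem_subOrbit_self hK1 x) (mem_subOrbit_self hK1 y)⟩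
  obtain ⟨z, hz, hzt⟩ := exists_lt_of_csInf_lt hne h
  obtain ⟨a, ⟨k, hk, rfl⟩, b, ⟨k', hk', rfl⟩, rfl⟩ := hz
  refine ⟨k⁻¹ * k', hKmul _ (hKinv _ hk) _ hk', ?_⟩
  have hd : dist x ((k⁻¹ * k') • y) = dist (k • x) (k' • y) := by
    rw [← (hisom k).dist_eq x ((k⁻¹ * k') • y), smul_smul]
    congr 2
    group
  rw [hd]
  exact hzt

end Aux

theorem properPair_iff_mu_HBI
    {G : Type*} [Group G] [TopologicalSpace G] [IsTopologicalGroup G]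
    [LocallyCompactSpace G] [T2Space G]
    {M : Type*} [MetricSpace M] [ProperSpace M] [MulAction G M]
    (hcont : Continuous fun p : G × M => p.1 • p.2)
    (hisom : ∀ g : G, Isometry fun x : M => g • x)
    (hproper : ∀ D : Set M, IsCompact D →
      IsCompact {g : G | ((fun x : M => g • x) '' D ∩ D).Nonempty})
    (htrans : ∀ x y : M, ∃ g : G, g • x = y)
    -- Property (S)
    (hS : ∀ r ≥ (0 : ℝ), ∃ τ ≥ (0 : ℝ), ∀ p₀ p q : M, dist p p₀ ≤ r →
      ∃ g : G, g • p = p₀ ∧ dist q (g • q) ≤ τ)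
    (star : M) (H₁ H₂ : Set G) (h₁ : H₁.Nonempty) (h₂ : H₂.Nonempty) :
    IsProperPair H₁ H₂ ↔
      -- for every `r ≥ 0`, `μ(H₁) ∩ N̄_r(μ(H₂))` is bounded in `(K\M, d^K)`,
      -- where `K = {g : g • * = *}` and `μ(g) = K·(g • *)`
      ∀ r ≥ (0 : ℝ), ∃ R : ℝ, ∀ h ∈ H₁, ∀ h' ∈ H₁,
        (∃ h₂ ∈ H₂, orbitDistOf {k : G | k • star = star} (h • star) (h₂ • star) ≤ r) →
        (∃ h₂ ∈ H₂, orbitDistOf {k : G | k • star = star} (h' • star) (h₂ • star) ≤ r) →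
        orbitDistOf {k : G | k • star = star} (h • star) (h' • star) ≤ R := by
  classical
  set K : Set G := {k : G | k • star = star} with hKdef
  -- basic facts about K
  have hK1 : (1 : G) ∈ K := one_smul G star
  have hKinv : ∀ k ∈ K, k⁻¹ ∈ K := by
    intro k hk
    have : k⁻¹ • k • star = k⁻¹ • star := by rw [hk]
    exact (by simpa [inv_smul_smul] using this.symm : k⁻¹ • star = star)
  have hKmul : ∀ k ∈ K, ∀ k' ∈ K, k * k' ∈ K := by
    intro k hk k' hk'
    show (k * k') • star = star
    rw [mul_smul, hk', hk]
  have hφ : Continuous fun g : G => g • star :=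
    hcont.comp (continuous_id.prodMk continuous_const)
  have hdeq : ∀ (g : G) (x y : M), dist (g • x) (g • y) = dist x y :=
    fun g x y => (hisom g).dist_eq x y
  have hKcompact : IsCompact K := by
    have hKeq : K = {g : G | ((fun x : M => g • x) '' {star} ∩ {star}).Nonempty} := by
      ext g
      simp [hKdef, Set.image_singleton, Set.singleton_inter_nonempty, eq_comm]
    rw [hKeq]
    exact hproper _ isCompact_singleton
  -- displacement bound on compact sets
  have hdisp : ∀ F : Set G, IsCompact F → ∃ c ≥ (0 : ℝ), ∀ f ∈ F, dist (f • star) star ≤ c := by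
    intro F hF
    obtain ⟨ρ, hρ⟩ := (hF.image hφ).isBounded.subset_closedBall star
    refine ⟨max ρ 0, le_max_right _ _, fun f hf => ?_⟩
    exact le_trans (hρ ⟨f, hf, rfl⟩) (le_max_left _ _)
  -- bounded star-displacement implies contained in a compact set
  have hcomp : ∀ ρ : ℝ, 0 ≤ ρ →
      ∃ E : Set G, IsCompact E ∧ ∀ g : G, dist (g • star) star ≤ ρ → g ∈ E := by
    intro ρ hρ
    refine ⟨{g : G | ((fun x : M => g • x) '' Metric.closedBall star ρ ∩
      Metric.closedBall star ρ).Nonempty}, hproper _ (isCompact_closedBall star ρ), ?_⟩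
    intro g hg
    exact ⟨g • star, ⟨star, by simpa using hρ, rfl⟩, by simpa using hg⟩
  constructor
  · -- proper pair → bounded intersections
    intro hpp r hr
    obtain ⟨E, hE, hEmem⟩ := hcomp (r + 1) (by linarith)
    set D₂ : Set G := K ∪ E⁻¹ with hD₂def
    have hD₂c : IsCompact D₂ := hKcompact.union hE.inv
    have hL := hpp {1} D₂ isCompact_singleton hD₂c
    set L := closure (({1} * H₁ * ({1} : Set G)⁻¹) ∩ (D₂ * H₂ * D₂⁻¹)) with hLdef
    obtain ⟨R, hR⟩ := (hL.image hφ).isBounded.subset_closedBall star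
    refine ⟨2 * R, ?_⟩
    -- every qualifying h lies in L
    have key : ∀ h ∈ H₁,
        (∃ b₂ ∈ H₂, orbitDistOf K (h • star) (b₂ • star) ≤ r) → h ∈ L := by
      rintro h hh ⟨b₂, hb₂, hd⟩
      obtain ⟨k₀, hk₀, hdist⟩ := orbitDist_extract hisom hK1 hKinv hKmul
        (lt_of_le_of_lt hd (by linarith : r < r + 1))
      -- h = (k₀ * b₂) * c with c of small displacement
      set cc : G := (k₀ * b₂)⁻¹ * h with hccdef
      have hccE : cc ∈ E := by
        apply hEmem
        have hsm : (k₀ * b₂) • cc • star = h • star := by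
          rw [smul_smul, hccdef, mul_inv_cancel_left]
        have hdc : dist (cc • star) star = dist (h • star) ((k₀ * b₂) • star) := by
          rw [← (hisom (k₀ * b₂)).dist_eq (cc • star) star, hsm]
        rw [hdc, mul_smul]
        exact le_of_lt hdist
      apply subset_closure
      constructor
      · have hm := Set.mul_mem_mul (Set.mul_mem_mul (Set.mem_singleton (1 : G)) hh)
          (show (1 : G) ∈ ({1} : Set G)⁻¹ by simp)
        simpa using hm
      · have hmem1 : k₀ * b₂ ∈ D₂ * H₂ :=
          Set.mul_mem_mul (Or.inl hk₀) hb₂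
        have hmem2 : cc ∈ D₂⁻¹ := by
          rw [Set.mem_inv]
          exact Or.inr (by rwa [Set.mem_inv, inv_inv])
        have := Set.mul_mem_mul hmem1 hmem2
        rwa [hccdef, mul_inv_cancel_left] at this
    intro h hh h' hh' hhq hhq'
    have hm1 : h • star ∈ Metric.closedBall star R := hR ⟨h, key h hh hhq, rfl⟩
    have hm2 : h' • star ∈ Metric.closedBall star R := hR ⟨h', key h' hh' hhq', rfl⟩
    calc orbitDistOf K (h • star) (h' • star)
        ≤ dist (h • star) (h' • star) :=
          orbitDist_le K (mem_subOrbit_self hK1 _) (mem_subOrbit_self hK1 _)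
      _ ≤ dist (h • star) star + dist star (h' • star) := dist_triangle _ _ _
      _ ≤ R + R := add_le_add (by simpa using hm1) (by rw [dist_comm]; simpa using hm2)
      _ = 2 * R := by ring
  · -- bounded intersections → proper pair
    intro hB D₁ D₂ hD₁ hD₂
    set X := (D₁ * H₁ * D₁⁻¹) ∩ (D₂ * H₂ * D₂⁻¹) with hXdef
    rcases X.eq_empty_or_nonempty with hXe | ⟨g₀, hg₀⟩
    · rw [hXe, closure_empty]; exact isCompact_empty
    obtain ⟨c, hc0, hc⟩ := hdisp (D₁⁻¹ * D₂ ∪ D₂⁻¹ * D₁ ∪ D₁⁻¹)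
      (((hD₁.inv.mul hD₂).union (hD₂.inv.mul hD₁)).union hD₁.inv)
    obtain ⟨τ, hτ0, hτ⟩ := hS c hc0
    obtain ⟨R, hR⟩ := hB (c + τ) (by linarith)
    -- key: each g ∈ X arises from some h ∈ H₁ that is d^K-close to μ(H₂),
    -- and with g • star close to (d₁ * h) • star for some d₁ ∈ D₁
    have key : ∀ g ∈ X, ∃ h ∈ H₁,
        (∃ b₂ ∈ H₂, orbitDistOf K (h • star) (b₂ • star) ≤ c + τ) ∧
        ∃ d₁ ∈ D₁, dist (g • star) (d₁ • h • star) ≤ c := by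
      rintro g ⟨⟨u, ⟨d₁, hd₁, h, hh, rfl⟩, e₁, he₁, rfl⟩, hg2⟩
      obtain ⟨v, ⟨d₂, hd₂, b₂, hb₂, rfl⟩, e₂, he₂, heq⟩ := hg2
      refine ⟨h, hh, ?_, d₁, hd₁, ?_⟩
      · -- d^K(h • star, b₂ • star) ≤ c + τ
        set a : G := d₁⁻¹ * d₂ with hadef
        set b : G := e₂ * e₁⁻¹ with hbdef
        have heq' : d₂ * b₂ * e₂ = d₁ * h * e₁ := heq
        have hab : h = a * b₂ * b := by
          have h1 : d₁⁻¹ * (d₂ * b₂ * e₂) * e₁⁻¹ = h := by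
            rw [heq']; group
          rw [← h1, hadef, hbdef]; group
        have haF : a ∈ D₁⁻¹ * D₂ ∪ D₂⁻¹ * D₁ ∪ D₁⁻¹ :=
          Or.inl (Or.inl (Set.mul_mem_mul (Set.inv_mem_inv.2 hd₁) hd₂))
        have hbF : b ∈ D₁⁻¹ * D₂ ∪ D₂⁻¹ * D₁ ∪ D₁⁻¹ :=
          Or.inl (Or.inr (Set.mul_mem_mul he₂ (Set.mem_inv.1 he₁)))
        have hstep1 : dist (h • star) ((a * b₂) • star) ≤ c := by
          have hsm : h • star = (a * b₂) • b • star := by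
            rw [hab, smul_smul]
          rw [hsm, (hisom (a * b₂)).dist_eq (b • star) star]
          exact hc b hbF
        obtain ⟨g', hg'1, hg'2⟩ := hτ star (a • star) ((a * b₂) • star) (hc a haF)
        set k : G := g' * a with hkdef
        have hkK : k ∈ K := by
          show (g' * a) • star = star
          rw [mul_smul, hg'1]
        have hk2 : k • b₂ • star = g' • (a * b₂) • star := by
          rw [hkdef, smul_smul, smul_smul, mul_assoc]
        refine ⟨b₂, hb₂, ?_⟩
        have hfin : dist (h • star) (k • b₂ • star) ≤ c + τ := by
          rw [hk2]
          calc dist (h • star) (g' • (a * b₂) • star)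
              ≤ dist (h • star) ((a * b₂) • star) +
                dist ((a * b₂) • star) (g' • (a * b₂) • star) := dist_triangle _ _ _
            _ ≤ c + τ := add_le_add hstep1 hg'2
        exact le_trans (orbitDist_le K (mem_subOrbit_self hK1 _) ⟨k, hkK, rfl⟩) hfin
      · -- dist (g • star) (d₁ • h • star) ≤ c
        have hsm : (d₁ * h * e₁) • star = d₁ • h • e₁ • star := by
          rw [mul_smul, mul_smul]
        rw [hsm, hdeq, hdeq]
        exact hc e₁ (Or.inr he₁)
    -- fix the reference element
    obtain ⟨h₀, hh₀, hq₀, d₁₀, hd₁₀, hgd₀⟩ := key g₀ hg₀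
    obtain ⟨c', hc'0, hc'⟩ := hdisp (D₁ * (K * {h₀}))
      (hD₁.mul (hKcompact.mul isCompact_singleton))
    have hRnn : (0 : ℝ) ≤ R := by
      have h00 := hR h₀ hh₀ h₀ hh₀ hq₀ hq₀
      exact le_trans (orbitDist_nonneg hK1 _ _) h00
    set ρ : ℝ := c + (R + 1) + c' with hρdef
    obtain ⟨E, hE, hEmem⟩ := hcomp ρ (by rw [hρdef]; linarith)
    have hXE : X ⊆ E := by
      intro g hg
      obtain ⟨h, hh, hq, d₁, hd₁, hgd⟩ := key g hg
      apply hEmem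
      have hdk : orbitDistOf K (h • star) (h₀ • star) ≤ R := hR h hh h₀ hh₀ hq hq₀
      obtain ⟨k₀, hk₀, hkd⟩ := orbitDist_extract hisom hK1 hKinv hKmul
        (lt_of_le_of_lt hdk (by linarith : R < R + 1))
      have hmid : dist (d₁ • h • star) (d₁ • k₀ • h₀ • star) < R + 1 := by
        rw [hdeq]
        exact hkd
      have hlast : dist (d₁ • k₀ • h₀ • star) star ≤ c' := by
        have hmem : d₁ * (k₀ * h₀) ∈ D₁ * (K * {h₀}) :=
          Set.mul_mem_mul hd₁ (Set.mul_mem_mul hk₀ rfl)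
        have := hc' _ hmem
        rwa [mul_smul, mul_smul] at this
      calc dist (g • star) star
          ≤ dist (g • star) (d₁ • h • star) + dist (d₁ • h • star) star :=
            dist_triangle _ _ _
        _ ≤ dist (g • star) (d₁ • h • star) +
            (dist (d₁ • h • star) (d₁ • k₀ • h₀ • star) +
             dist (d₁ • k₀ • h₀ • star) star) :=
            add_le_add_right (dist_triangle _ _ _) _
        _ ≤ c + ((R + 1) + c') := by
            refine add_le_add hgd (add_le_add (le_of_lt hmid) hlast)
        _ = ρ := by rw [hρdef]; ring
    exact hE.of_isClosed_subset isClosed_closure (closure_minimal hXE hE.isClosed)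
end
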